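/- Under the billiard polygon setup with h the support function of an ellipse with a₁ ≠ a₂ and under the Joachimsthal hypothesis, let P = (p, q) ∈ ℝ² and let Qᵢ = P + (h(ψᵢ) − ⟨P, nᵢ⟩)·nᵢ, where nᵢ = (cos ψᵢ, sin ψᵢ), be the foot of the perpendicular from P to the tangent line to the ellipse at Mᵢ. Then Σ_{i=1}^{n} ‖P − Qᵢ‖² = L/(2J) + (p²·(n + C) + q²·(n − C))/2, where C = (L/J − n·(a₁² + a₂²))/(a₁² − a₂²). In particular, this sum depends only on P, n, J and L. -/

import Mathlib

open Real

private lemma inner_comp' (u v : EuclideanSpace ℝ (Fin 2)) :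
    (inner ℝ u v : ℝ) = u 0 * v 0 + u 1 * v 1 := by
  simp [PiLp.inner_apply, Fin.sum_univ_two, RCLike.inner_apply]
  ring

private lemma norm_sq_comp' (u : EuclideanSpace ℝ (Fin 2)) :
    ‖u‖ ^ 2 = u 0 ^ 2 + u 1 ^ 2 := by
  rw [EuclideanSpace.norm_eq, Real.sq_sqrt (by positivity)]
  simp [Fin.sum_univ_two, Real.norm_eq_abs, sq_abs]

private lemma norm_eq_one_of_sq (u : EuclideanSpace ℝ (Fin 2))
    (h : u 0 ^ 2 + u 1 ^ 2 = 1) : ‖u‖ = 1 := by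
  have h2 : ‖u‖ ^ 2 = 1 := by rw [norm_sq_comp']; exact h
  rw [show (1:ℝ) = Real.sqrt 1 by simp, ← h2, Real.sqrt_sq (norm_nonneg u)]

private lemma cyc_sum (m : ℕ) (g : ℕ → ℝ) :
    ∑ k ∈ Finset.range (m+1), g (if k + 1 = m + 1 then 1 else k + 1 + 1)
      = ∑ k ∈ Finset.range (m+1), g (k + 1) := by
  rw [Finset.sum_range_succ, Finset.sum_range_succ' (fun k => g (k+1)) m]
  simp only [if_pos rfl]
  congr 1
  apply Finset.sum_congr rfl
  intro k hk
  rw [Finset.mem_range] at hk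
  rw [if_neg (by omega)]

/-- Sum of squared distances from a point `P = (p,q)` to the tangent lines: `∑ ‖P - Qᵢ‖² = L/(2J) + (p²(n+C) + q²(n-C))/2`. -/
theorem stmt_13
    (a₁ a₂ : ℝ) (ha₁ : 0 < a₁) (ha₂ : 0 < a₂)
    (h : ℝ → ℝ)
    (hh : ∀ x : ℝ, h x = Real.sqrt (a₁ ^ 2 * Real.cos x ^ 2 + a₂ ^ 2 * Real.sin x ^ 2))
    (n : ℕ) (hn : 2 ≤ n)
    (φ ψ δ : ℕ → ℝ)
    (hφ : φ n = φ 0 + 2 * Real.pi)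
    (hψ : ∀ i ∈ Finset.Icc 1 n, ψ i = (φ (i - 1) + φ i) / 2)
    (hδ : ∀ i ∈ Finset.Icc 1 n, δ i = (φ i - φ (i - 1)) / 2)
    (M : ℕ → EuclideanSpace ℝ (Fin 2))
    (hM : ∀ i ∈ Finset.Icc 1 n, M i
        = h (ψ i) • (!₂[Real.cos (ψ i), Real.sin (ψ i)] : EuclideanSpace ℝ (Fin 2))
        + deriv h (ψ i) • (!₂[-Real.sin (ψ i), Real.cos (ψ i)] : EuclideanSpace ℝ (Fin 2)))
    (hMwrap : M (n + 1) = M 1)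
    (chord : ∀ i ∈ Finset.Icc 1 n, ∃ t : ℝ, 0 < t ∧
        M (i + 1) - M i = t • (!₂[-Real.sin (φ i), Real.cos (φ i)] : EuclideanSpace ℝ (Fin 2)))
    (J : ℝ) (hJ : 0 < J)
    (hJoach : ∀ i ∈ Finset.Icc 1 n, Real.sin (δ i) = J * h (ψ i))
    (ha : a₁ ≠ a₂)
    (L : ℝ) (hL : L = ∑ i ∈ Finset.Icc 1 n, ‖M (i + 1) - M i‖)
    (p q : ℝ) (P : EuclideanSpace ℝ (Fin 2)) (hP : P = !₂[p, q])
    (N : ℕ → EuclideanSpace ℝ (Fin 2))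
    (hN : ∀ i ∈ Finset.Icc 1 n, N i = !₂[Real.cos (ψ i), Real.sin (ψ i)])
    (Q : ℕ → EuclideanSpace ℝ (Fin 2))
    (hQ : ∀ i ∈ Finset.Icc 1 n, Q i = P + (h (ψ i) - (inner ℝ P (N i) : ℝ)) • N i)
    (C : ℝ) (hC : C = (L / J - n * (a₁ ^ 2 + a₂ ^ 2)) / (a₁ ^ 2 - a₂ ^ 2))
    : ∑ i ∈ Finset.Icc 1 n, ‖P - Q i‖ ^ 2
      = L / (2 * J) + (p ^ 2 * (n + C) + q ^ 2 * (n - C)) / 2 := by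
  obtain ⟨m, rfl⟩ : ∃ m, n = m + 1 := ⟨n - 1, by omega⟩
  have hJne : J ≠ 0 := ne_of_gt hJ
  -- basic facts about h
  have hg0 : ∀ x : ℝ, 0 < a₁^2 * Real.cos x^2 + a₂^2 * Real.sin x^2 := by
    intro x
    nlinarith [mul_pos (pow_pos ha₁ 2) (pow_pos ha₂ 2), Real.sin_sq_add_cos_sq x,
      sq_nonneg (a₁^2*Real.cos x), sq_nonneg (a₂^2*Real.sin x), pow_pos ha₁ 2, pow_pos ha₂ 2,
      sq_nonneg (Real.cos x), sq_nonneg (Real.sin x)]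
  have hgsq : ∀ x : ℝ, h x ^ 2 = a₁^2 * Real.cos x^2 + a₂^2 * Real.sin x^2 := by
    intro x; rw [hh]; exact Real.sq_sqrt (le_of_lt (hg0 x))
  have hderiv : ∀ x : ℝ, h x * deriv h x = (a₂^2 - a₁^2) * (Real.sin x * Real.cos x) := by
    intro x
    have hfun : h = fun x => Real.sqrt (a₁^2*Real.cos x^2 + a₂^2*Real.sin x^2) := by
      funext y; rw [hh]
    have hg' : HasDerivAt (fun x => a₁^2*Real.cos x^2 + a₂^2*Real.sin x^2)
        (a₁^2 * (2*Real.cos x * -Real.sin x) + a₂^2 * (2*Real.sin x * Real.cos x)) x := by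
      have h1 := ((Real.hasDerivAt_cos x).pow 2).const_mul (a₁^2)
      have h2 := ((Real.hasDerivAt_sin x).pow 2).const_mul (a₂^2)
      refine (h1.add h2).congr_deriv ?_
      push_cast
      ring
    have hs := hg'.sqrt (ne_of_gt (hg0 x))
    have hd : deriv h x = (a₁^2 * (2*Real.cos x * -Real.sin x) + a₂^2*(2*Real.sin x*Real.cos x))
        / (2 * Real.sqrt (a₁^2*Real.cos x^2 + a₂^2*Real.sin x^2)) := by
      rw [hfun]; exact hs.deriv
    have hr : Real.sqrt (a₁^2*Real.cos x^2 + a₂^2*Real.sin x^2) ≠ 0 :=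
      ne_of_gt (Real.sqrt_pos.mpr (hg0 x))
    rw [hd, hh x]
    field_simp
    ring
  -- sum conversions
  have sumIcc : ∀ f : ℕ → ℝ, ∑ i ∈ Finset.Icc 1 (m+1), f i = ∑ k ∈ Finset.range (m+1), f (k+1) := by
    intro f
    rw [← Finset.Ico_add_one_right_eq_Icc, Finset.sum_Ico_eq_sum_range]
    exact Finset.sum_congr rfl fun k _ => by rw [add_comm]
  have cycS : ∀ f : ℕ → ℝ,
      ∑ i ∈ Finset.Icc 1 (m+1), f (if i = m+1 then 1 else i+1)
        = ∑ i ∈ Finset.Icc 1 (m+1), f i := by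
    intro f
    rw [sumIcc (fun i => f (if i = m+1 then 1 else i+1)), sumIcc f]
    exact cyc_sum m f
  have telS : ∀ f : ℕ → ℝ, ∑ i ∈ Finset.Icc 1 (m+1), (f i - f (i-1)) = f (m+1) - f 0 := by
    intro f
    rw [sumIcc (fun i => f i - f (i-1))]
    simp only [Nat.add_sub_cancel]
    exact Finset.sum_range_sub f (m+1)
  -- key chordal identities
  have key : ∀ i ∈ Finset.Icc 1 (m+1),
      (‖M (i+1) - M i‖
        = (h (ψ (if i = m+1 then 1 else i+1)) * Real.sin (δ (if i = m+1 then 1 else i+1))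
            + deriv h (ψ (if i = m+1 then 1 else i+1)) * Real.cos (δ (if i = m+1 then 1 else i+1)))
          - (-(h (ψ i) * Real.sin (δ i)) + deriv h (ψ i) * Real.cos (δ i)))
      ∧ ((h (ψ (if i = m+1 then 1 else i+1)) * Real.cos (δ (if i = m+1 then 1 else i+1))
            - deriv h (ψ (if i = m+1 then 1 else i+1)) * Real.sin (δ (if i = m+1 then 1 else i+1)))
          = h (ψ i) * Real.cos (δ i) + deriv h (ψ i) * Real.sin (δ i)) := by
    intro i hi
    rw [Finset.mem_Icc] at hi
    obtain ⟨t, ht, hte⟩ := chord i (by rw [Finset.mem_Icc]; exact hi)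
    set j := if i = m+1 then 1 else i+1 with hj
    -- angle facts
    have hmemj : j ∈ Finset.Icc 1 (m+1) := by
      rw [Finset.mem_Icc]; rw [hj]; split <;> omega
    have hmemi : i ∈ Finset.Icc 1 (m+1) := by rw [Finset.mem_Icc]; exact hi
    have hψi : ψ i - φ i = -δ i := by
      rw [hψ i hmemi, hδ i hmemi]; ring
    have hang : Real.cos (ψ j - φ i) = Real.cos (δ j) ∧ Real.sin (ψ j - φ i) = Real.sin (δ j) := by
      rcases eq_or_ne i (m+1) with h1 | h1
      · subst h1
        have hj1 : j = 1 := by rw [hj, if_pos rfl]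
        rw [hj1]
        have hm1 : (1:ℕ) ∈ Finset.Icc 1 (m+1) := by rw [Finset.mem_Icc]; omega
        have e1 : ψ 1 = (φ 0 + φ 1)/2 := by have := hψ 1 hm1; simpa using this
        have e2 : δ 1 = (φ 1 - φ 0)/2 := by have := hδ 1 hm1; simpa using this
        have e3 : ψ 1 - φ (m+1) = δ 1 - 2*Real.pi := by rw [e1, e2, hφ]; ring
        rw [e3, Real.cos_sub_two_pi, Real.sin_sub_two_pi]
        exact ⟨rfl, rfl⟩
      · have hj1 : j = i + 1 := by rw [hj, if_neg h1]
        rw [hj1]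
        have hm1 : i + 1 ∈ Finset.Icc 1 (m+1) := by rw [Finset.mem_Icc]; omega
        have e1 : ψ (i+1) = (φ i + φ (i+1))/2 := by have := hψ (i+1) hm1; simpa using this
        have e2 : δ (i+1) = (φ (i+1) - φ i)/2 := by have := hδ (i+1) hm1; simpa using this
        have e3 : ψ (i+1) - φ i = δ (i+1) := by rw [e1, e2]; ring
        rw [e3]
        exact ⟨rfl, rfl⟩
    -- components of M i and M (i+1)
    have c0 : M i 0 = h (ψ i) * Real.cos (ψ i) + deriv h (ψ i) * (-Real.sin (ψ i)) := by
      rw [hM i hmemi]; simp [PiLp.add_apply, PiLp.smul_apply, smul_eq_mul]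
    have c1 : M i 1 = h (ψ i) * Real.sin (ψ i) + deriv h (ψ i) * Real.cos (ψ i) := by
      rw [hM i hmemi]; simp [PiLp.add_apply, PiLp.smul_apply, smul_eq_mul]
    have hMj : M (i+1) = M j := by
      rcases eq_or_ne i (m+1) with h1 | h1
      · subst h1; rw [hj, if_pos rfl]; exact hMwrap
      · rw [hj, if_neg h1]
    have d0 : M (i+1) 0 = h (ψ j) * Real.cos (ψ j) + deriv h (ψ j) * (-Real.sin (ψ j)) := by
      rw [hMj, hM j hmemj]; simp [PiLp.add_apply, PiLp.smul_apply, smul_eq_mul]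
    have d1 : M (i+1) 1 = h (ψ j) * Real.sin (ψ j) + deriv h (ψ j) * Real.cos (ψ j) := by
      rw [hMj, hM j hmemj]; simp [PiLp.add_apply, PiLp.smul_apply, smul_eq_mul]
    -- the chord equation, componentwise
    have E0 : M (i+1) 0 - M i 0 = t * (-Real.sin (φ i)) := by
      have : (M (i+1) - M i) 0 = M (i+1) 0 - M i 0 := rfl
      rw [← this, hte]
      simp [PiLp.smul_apply, smul_eq_mul]
    have E1 : M (i+1) 1 - M i 1 = t * Real.cos (φ i) := by
      have : (M (i+1) - M i) 1 = M (i+1) 1 - M i 1 := rfl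
      rw [← this, hte]
      simp [PiLp.smul_apply, smul_eq_mul]
    rw [c0, d0] at E0
    rw [c1, d1] at E1
    -- projections
    have p1 : (h (ψ j) * Real.sin (ψ j - φ i) + deriv h (ψ j) * Real.cos (ψ j - φ i))
        - (h (ψ i) * Real.sin (ψ i - φ i) + deriv h (ψ i) * Real.cos (ψ i - φ i)) = t := by
      simp only [Real.sin_sub, Real.cos_sub]
      linear_combination (-Real.sin (φ i)) * E0 + Real.cos (φ i) * E1
        + t * (Real.sin_sq_add_cos_sq (φ i))
    have p2 : (h (ψ j) * Real.cos (ψ j - φ i) - deriv h (ψ j) * Real.sin (ψ j - φ i))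
        - (h (ψ i) * Real.cos (ψ i - φ i) - deriv h (ψ i) * Real.sin (ψ i - φ i)) = 0 := by
      simp only [Real.sin_sub, Real.cos_sub]
      linear_combination Real.cos (φ i) * E0 + Real.sin (φ i) * E1
    rw [hang.1, hang.2, hψi, Real.cos_neg, Real.sin_neg] at p1 p2
    constructor
    · -- norm of the chord is t
      have hnorm : ‖M (i+1) - M i‖ = t := by
        rw [hte, norm_smul, norm_eq_one_of_sq _ (by simp [Real.sin_sq_add_cos_sq]),
          Real.norm_eq_abs, abs_of_pos ht, mul_one]
      rw [hnorm]
      linarith [p1]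
    · linarith [p2]
  -- names for the basic sums
  set A : ℝ := ∑ i ∈ Finset.Icc 1 (m+1), h (ψ i)^2 with hA
  set B1 : ℝ := ∑ i ∈ Finset.Icc 1 (m+1), h (ψ i) * Real.cos (ψ i) with hB1
  set B2 : ℝ := ∑ i ∈ Finset.Icc 1 (m+1), h (ψ i) * Real.sin (ψ i) with hB2
  set SC : ℝ := ∑ i ∈ Finset.Icc 1 (m+1), Real.sin (ψ i) * Real.cos (ψ i) with hSC
  set S2 : ℝ := ∑ i ∈ Finset.Icc 1 (m+1), Real.cos (ψ i)^2 with hS2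
  set S3 : ℝ := ∑ i ∈ Finset.Icc 1 (m+1), Real.sin (ψ i)^2 with hS3
  -- perimeter identity : L = 2 J A
  have hLA : L = 2*J*A := by
    rw [hL, Finset.sum_congr rfl (fun i hi => (key i hi).1), Finset.sum_sub_distrib,
      cycS (fun i => h (ψ i) * Real.sin (δ i) + deriv h (ψ i) * Real.cos (δ i)),
      ← Finset.sum_sub_distrib]
    have : ∀ i ∈ Finset.Icc 1 (m+1),
        (h (ψ i) * Real.sin (δ i) + deriv h (ψ i) * Real.cos (δ i))
          - (-(h (ψ i) * Real.sin (δ i)) + deriv h (ψ i) * Real.cos (δ i))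
        = 2*J*(h (ψ i)^2) := by
      intro i hi
      rw [hJoach i hi]
      ring
    rw [Finset.sum_congr rfl this, ← Finset.mul_sum]
  -- the reflection identity gives ∑ sin ψ cos ψ = 0
  have hSC0 : SC = 0 := by
    have h1 : ∑ i ∈ Finset.Icc 1 (m+1),
        (h (ψ i) * Real.cos (δ i) - deriv h (ψ i) * Real.sin (δ i))
        = ∑ i ∈ Finset.Icc 1 (m+1),
        (h (ψ i) * Real.cos (δ i) + deriv h (ψ i) * Real.sin (δ i)) := by
      rw [← cycS (fun i => h (ψ i) * Real.cos (δ i) - deriv h (ψ i) * Real.sin (δ i))]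
      exact Finset.sum_congr rfl (fun i hi => (key i hi).2)
    have h2 : ∑ i ∈ Finset.Icc 1 (m+1), deriv h (ψ i) * Real.sin (δ i) = 0 := by
      have h3 := h1
      rw [Finset.sum_sub_distrib, Finset.sum_add_distrib] at h3
      linarith
    have h4 : ∀ i ∈ Finset.Icc 1 (m+1),
        deriv h (ψ i) * Real.sin (δ i) = J * ((a₂^2 - a₁^2) * (Real.sin (ψ i) * Real.cos (ψ i))) := by
      intro i hi
      rw [hJoach i hi, ← hderiv (ψ i)]
      ring
    rw [Finset.sum_congr rfl h4, ← Finset.mul_sum, ← Finset.mul_sum] at h2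
    have hne2 : a₂^2 - a₁^2 ≠ 0 := by
      intro hcon
      apply ha
      have h5 : (a₁ - a₂)*(a₁ + a₂) = 0 := by linear_combination -hcon
      rcases mul_eq_zero.mp h5 with h6 | h6
      · linarith
      · linarith
    have := mul_eq_zero.mp h2
    rcases this with h7 | h7
    · exact absurd h7 hJne
    · rcases mul_eq_zero.mp h7 with h8 | h8
      · exact absurd h8 hne2
      · exact h8
  -- telescoping sums : B1 = 0 and B2 = 0
  have hB10 : B1 = 0 := by
    have hptw : ∀ i ∈ Finset.Icc 1 (m+1),
        h (ψ i) * Real.cos (ψ i) = (1/(2*J)) * (Real.sin (φ i) - Real.sin (φ (i-1))) := by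
      intro i hi
      have e1 := hψ i hi
      have e2 := hδ i hi
      have hj := hJoach i hi
      have f1 : φ i = ψ i + δ i := by rw [e1, e2]; ring
      have f2 : φ (i-1) = ψ i - δ i := by rw [e1, e2]; ring
      rw [f1, f2, Real.sin_add, Real.sin_sub, hj]
      field_simp
      ring
    rw [hB1, Finset.sum_congr rfl hptw, ← Finset.mul_sum,
      telS (fun k => Real.sin (φ k)), hφ, Real.sin_add_two_pi]
    ring
  have hB20 : B2 = 0 := by
    have hptw : ∀ i ∈ Finset.Icc 1 (m+1),
        h (ψ i) * Real.sin (ψ i) = (-(1/(2*J))) * (Real.cos (φ i) - Real.cos (φ (i-1))) := by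
      intro i hi
      have e1 := hψ i hi
      have e2 := hδ i hi
      have hj := hJoach i hi
      have f1 : φ i = ψ i + δ i := by rw [e1, e2]; ring
      have f2 : φ (i-1) = ψ i - δ i := by rw [e1, e2]; ring
      rw [f1, f2, Real.cos_add, Real.cos_sub, hj]
      field_simp
      ring
    rw [hB2, Finset.sum_congr rfl hptw, ← Finset.mul_sum,
      telS (fun k => Real.cos (φ k)), hφ, Real.cos_add_two_pi]
    ring
  -- relations among S2, S3, A
  have hsum1 : S2 + S3 = ((m:ℝ)+1) := by
    rw [hS2, hS3, ← Finset.sum_add_distrib]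
    have : ∀ i ∈ Finset.Icc 1 (m+1), Real.cos (ψ i)^2 + Real.sin (ψ i)^2 = 1 := by
      intro i _; exact Real.cos_sq_add_sin_sq (ψ i)
    rw [Finset.sum_congr rfl this, Finset.sum_const, Nat.card_Icc]
    simp
  have hA2 : a₁^2 * S2 + a₂^2 * S3 = A := by
    rw [hA, Finset.sum_congr rfl (fun i _ => hgsq (ψ i)), Finset.sum_add_distrib,
      ← Finset.mul_sum, ← Finset.mul_sum, hS2, hS3]
  -- the value of C
  have hne2 : a₁^2 - a₂^2 ≠ 0 := by
    intro hcon
    apply ha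
    have h5 : (a₁ - a₂)*(a₁ + a₂) = 0 := by linear_combination hcon
    rcases mul_eq_zero.mp h5 with h6 | h6
    · linarith
    · linarith
  have hCeq : C * (a₁^2 - a₂^2) = 2*A - ((m:ℝ)+1)*(a₁^2+a₂^2) := by
    have hLJ : L / J = 2*A := by rw [hLA]; field_simp
    rw [hC, hLJ, div_mul_cancel₀ _ hne2]
    push_cast
    ring
  have hS2v : S2 = (((m:ℝ)+1) + C)/2 := by
    have h6 : (2*S2 - ((m:ℝ)+1) - C) * (a₁^2 - a₂^2) = 0 := by
      linear_combination 2*hA2 - 2*a₂^2*hsum1 - hCeq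
    rcases mul_eq_zero.mp h6 with h7 | h7
    · linarith
    · exact absurd h7 hne2
  have hS3v : S3 = (((m:ℝ)+1) - C)/2 := by linarith
  -- expand the left-hand side
  have ptw : ∀ i ∈ Finset.Icc 1 (m+1),
      ‖P - Q i‖^2 = (h (ψ i) - (p * Real.cos (ψ i) + q * Real.sin (ψ i)))^2 := by
    intro i hi
    rw [hQ i hi, sub_add_cancel_left, norm_neg, norm_smul, Real.norm_eq_abs, mul_pow, sq_abs]
    have hNn : ‖N i‖ = 1 := by
      rw [hN i hi]
      apply norm_eq_one_of_sq
      simp [Real.cos_sq_add_sin_sq]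
    have hPN : (inner ℝ P (N i) : ℝ) = p * Real.cos (ψ i) + q * Real.sin (ψ i) := by
      rw [inner_comp', hP, hN i hi]
      simp
    rw [hNn, hPN]
    ring
  have expand : ∑ i ∈ Finset.Icc 1 (m+1), ‖P - Q i‖^2
      = A - 2*p*B1 - 2*q*B2 + p^2*S2 + 2*p*q*SC + q^2*S3 := by
    rw [Finset.sum_congr rfl ptw]
    have : ∀ i ∈ Finset.Icc 1 (m+1),
        (h (ψ i) - (p * Real.cos (ψ i) + q * Real.sin (ψ i)))^2
        = h (ψ i)^2 - 2*p*(h (ψ i) * Real.cos (ψ i)) - 2*q*(h (ψ i) * Real.sin (ψ i))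
          + p^2*(Real.cos (ψ i)^2) + 2*p*q*(Real.sin (ψ i) * Real.cos (ψ i))
          + q^2*(Real.sin (ψ i)^2) := by
      intro i _; ring
    rw [Finset.sum_congr rfl this]
    simp only [Finset.sum_add_distrib, Finset.sum_sub_distrib, ← Finset.mul_sum]
    rfl
  rw [expand, hB10, hB20, hSC0, hS2v, hS3v]
  have hL2J : L / (2*J) = A := by rw [hLA]; field_simp
  rw [hL2J]
  push_cast
  ring
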